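/- Call a collection Δ ⊆ 𝒟/~ a d-system if: (i) [ℕ] ∈ Δ; (ii) for [A], [B] ∈ Δ with [A] ⪯_𝒩 [B] one has [B ∖ A] ∈ Δ; (iii) for [A], [B] ∈ Δ with A ∩ B = ∅ one has [A ∪ B] ∈ Δ; (iv) every ⪯_𝒩-increasing sequence in Δ has a least upper bound in 𝒟/~ which belongs to Δ. Let 𝓕 ⊆ 𝒟 be closed under finite intersections and let Δ be the intersection of all d-systems in 𝒟/~ containing 𝓕/~. Then Δ is closed under intersections: for all [A], [B] ∈ Δ, A ∩ B is a density set and [A ∩ B] ∈ Δ. -/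

import Mathlib

/-- The counting sequence `n ↦ |A ∩ {1,…,n}| / n` of a set of natural numbers. -/
noncomputable def densSeq (A : Set ℕ) (n : ℕ) : ℝ :=
  (Nat.card ↥(A ∩ Set.Icc 1 n) : ℝ) / (n : ℝ)

/-- `A` has natural density `a`. -/
def HasDens (A : Set ℕ) (a : ℝ) : Prop :=
  Filter.Tendsto (densSeq A) Filter.atTop (nhds a)

/-- `A` is a density set, i.e. its natural density exists. -/
def IsDensitySet (A : Set ℕ) : Prop := ∃ a, HasDens A a

/-- `A` is a null density set. -/
def NullDens (A : Set ℕ) : Prop := HasDens A 0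

/-- The relation `A ⪯_𝒩 B`: there is a null density set `N` with `A ⊆ B ∪ N`. -/
def DensLE (A B : Set ℕ) : Prop := ∃ N, NullDens N ∧ A ⊆ B ∪ N


/-- `K ∼ M`: the symmetric difference of `K` and `M` has null density. -/
def EquivDens (K M : Set ℕ) : Prop := NullDens (symmDiff K M)

/-- A *d-system* is a collection of `∼`-equivalence classes of density sets (represented
as a `∼`-saturated collection `Δ` of density sets) such that: (i) `[ℕ] ∈ Δ`;
(ii) `[A], [B] ∈ Δ` with `[A] ⪯_𝒩 [B]` implies `[B ∖ A] ∈ Δ`; (iii) `[A], [B] ∈ Δ` with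
`A ∩ B = ∅` implies `[A ∪ B] ∈ Δ`; (iv) every `⪯_𝒩`-increasing sequence in `Δ` has a
least upper bound in `𝒟/∼` which belongs to `Δ`. -/
def IsDSystem (Δ : Set (Set ℕ)) : Prop :=
  (∀ A ∈ Δ, IsDensitySet A) ∧
  (∀ A ∈ Δ, ∀ B, IsDensitySet B → EquivDens A B → B ∈ Δ) ∧
  Set.univ ∈ Δ ∧
  (∀ A ∈ Δ, ∀ B ∈ Δ, DensLE A B → B \ A ∈ Δ) ∧
  (∀ A ∈ Δ, ∀ B ∈ Δ, A ∩ B = ∅ → A ∪ B ∈ Δ) ∧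
  (∀ A : ℕ → Set ℕ, (∀ n, A n ∈ Δ) → (∀ n, DensLE (A n) (A (n + 1))) →
    ∃ B ∈ Δ, (∀ n, DensLE (A n) B) ∧
      ∀ C : Set ℕ, IsDensitySet C → (∀ n, DensLE (A n) C) → DensLE B C)

open Set Filter Topology

noncomputable def cnt (A : Set ℕ) (n : ℕ) : ℕ := (A ∩ Set.Icc 1 n).ncard

lemma cnt_finite (A : Set ℕ) (n : ℕ) : (A ∩ Set.Icc 1 n).Finite :=
  (Set.finite_Icc 1 n).inter_of_right A

lemma densSeq_eq (A : Set ℕ) (n : ℕ) : densSeq A n = (cnt A n : ℝ) / n := by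
  rw [densSeq, cnt, Nat.card_coe_set_eq]

lemma cnt_mono {A B : Set ℕ} (h : A ⊆ B) (n : ℕ) : cnt A n ≤ cnt B n :=
  Set.ncard_le_ncard (Set.inter_subset_inter_left _ h) (cnt_finite B n)

lemma cnt_le (A : Set ℕ) (n : ℕ) : cnt A n ≤ n := by
  have := Set.ncard_le_ncard (Set.inter_subset_right (s := A) (t := Set.Icc 1 n))
    (Set.finite_Icc 1 n)
  rw [cnt]
  refine this.trans ?_
  rw [Set.ncard_eq_toFinset_card']
  simp

lemma cnt_union_le (A B : Set ℕ) (n : ℕ) : cnt (A ∪ B) n ≤ cnt A n + cnt B n := by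
  rw [cnt, Set.union_inter_distrib_right]
  exact Set.ncard_union_le _ _

lemma cnt_union_eq {A B : Set ℕ} (h : A ∩ B = ∅) (n : ℕ) :
    cnt (A ∪ B) n = cnt A n + cnt B n := by
  rw [cnt, Set.union_inter_distrib_right]
  exact Set.ncard_union_eq (Set.disjoint_iff_inter_eq_empty.2 (by
    rw [← Set.inter_inter_distrib_right, h, Set.empty_inter]))
    (cnt_finite A n) (cnt_finite B n)

lemma cnt_diff {X B : Set ℕ} (h : X ⊆ B) (n : ℕ) :
    cnt (B \ X) n = cnt B n - cnt X n := by
  rw [cnt, cnt, cnt, show B \ X ∩ Set.Icc 1 n = (B ∩ Set.Icc 1 n) \ (X ∩ Set.Icc 1 n) by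
    ext x; simp only [Set.mem_diff, Set.mem_inter_iff, Set.mem_Icc]; tauto]
  exact Set.ncard_diff (Set.inter_subset_inter_left _ h) (cnt_finite X n)

lemma densSeq_nonneg (A : Set ℕ) (n : ℕ) : 0 ≤ densSeq A n := by
  rw [densSeq_eq]; positivity

lemma densSeq_le_one (A : Set ℕ) (n : ℕ) : densSeq A n ≤ 1 := by
  rw [densSeq_eq]
  rcases Nat.eq_zero_or_pos n with h | h
  · simp [h]
  · rw [div_le_one (by exact_mod_cast h)]
    exact_mod_cast cnt_le A n

lemma densSeq_mono {A B : Set ℕ} (h : A ⊆ B) (n : ℕ) : densSeq A n ≤ densSeq B n := by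
  rw [densSeq_eq, densSeq_eq]
  exact div_le_div_of_nonneg_right (by exact_mod_cast cnt_mono h n) (Nat.cast_nonneg n)


lemma densSeq_union_le (A B : Set ℕ) (n : ℕ) :
    densSeq (A ∪ B) n ≤ densSeq A n + densSeq B n := by
  rw [densSeq_eq, densSeq_eq, densSeq_eq, ← add_div]
  exact div_le_div_of_nonneg_right (by exact_mod_cast cnt_union_le A B n) (Nat.cast_nonneg n)

lemma densSeq_union_eq {A B : Set ℕ} (h : A ∩ B = ∅) (n : ℕ) :
    densSeq (A ∪ B) n = densSeq A n + densSeq B n := by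
  rw [densSeq_eq, densSeq_eq, densSeq_eq, ← add_div, cnt_union_eq h]
  push_cast; ring

lemma densSeq_diff {X B : Set ℕ} (h : X ⊆ B) (n : ℕ) :
    densSeq (B \ X) n = densSeq B n - densSeq X n := by
  rw [densSeq_eq, densSeq_eq, densSeq_eq, div_sub_div_same, cnt_diff h]
  congr 1
  have := cnt_mono h n
  push_cast [Nat.cast_sub this]
  ring

lemma nullDens_of_subset {N M : Set ℕ} (h : M ⊆ N) (hN : NullDens N) : NullDens M := by
  refine squeeze_zero (fun n => densSeq_nonneg M n) (fun n => densSeq_mono h n) hN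

lemma nullDens_union {N M : Set ℕ} (hN : NullDens N) (hM : NullDens M) :
    NullDens (N ∪ M) := by
  have h0 : Filter.Tendsto (fun n => densSeq N n + densSeq M n) Filter.atTop (nhds 0) := by
    simpa using hN.add hM
  exact squeeze_zero (fun n => densSeq_nonneg _ n) (fun n => densSeq_union_le N M n) h0

lemma nullDens_empty : NullDens (∅ : Set ℕ) :=
  nullDens_of_subset (Set.empty_subset _) (by
    have : NullDens (∅ : Set ℕ) := by
      unfold NullDens HasDens
      have : ∀ n, densSeq (∅ : Set ℕ) n = 0 := by
        intro n; rw [densSeq_eq]; simp [cnt]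
      simpa [funext this] using tendsto_const_nhds
    exact this)

lemma nullDens_Iic (m : ℕ) : NullDens (Set.Iic m) := by
  have hb : ∀ n, densSeq (Set.Iic m) n ≤ (m : ℝ) / n := by
    intro n
    rw [densSeq_eq]
    refine div_le_div_of_nonneg_right ?_ (Nat.cast_nonneg n)
    · have hcm : cnt (Set.Iic m) n ≤ m := by
          have hsub : Set.Iic m ∩ Set.Icc 1 n ⊆ Set.Icc 1 m := by
            intro x hx
            simp only [Set.mem_inter_iff, Set.mem_Iic, Set.mem_Icc] at hx ⊢
            exact ⟨hx.2.1, hx.1⟩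
          calc cnt (Set.Iic m) n ≤ (Set.Icc 1 m).ncard :=
                Set.ncard_le_ncard hsub (Set.finite_Icc 1 m)
            _ = m := by rw [Set.ncard_eq_toFinset_card']; simp
      exact_mod_cast hcm
  have h0 : Filter.Tendsto (fun n : ℕ => (m : ℝ) / n) Filter.atTop (nhds 0) :=
    tendsto_const_nhds.div_atTop tendsto_natCast_atTop_atTop
  exact squeeze_zero (fun n => densSeq_nonneg _ n) hb h0

lemma densLE_of_subset {A B : Set ℕ} (h : A ⊆ B) : DensLE A B :=
  ⟨∅, nullDens_empty, fun x hx => Or.inl (h hx)⟩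

lemma densLE_refl (A : Set ℕ) : DensLE A A := densLE_of_subset (subset_refl A)

lemma densLE_trans {A B C : Set ℕ} (h1 : DensLE A B) (h2 : DensLE B C) : DensLE A C := by
  obtain ⟨N1, hN1, hs1⟩ := h1
  obtain ⟨N2, hN2, hs2⟩ := h2
  refine ⟨N1 ∪ N2, nullDens_union hN1 hN2, ?_⟩
  intro x hx
  rcases hs1 hx with h | h
  · rcases hs2 h with h' | h'
    · exact Or.inl h'
    · exact Or.inr (Or.inr h')
  · exact Or.inr (Or.inl h)

-- counting comparison through a null "error" set
lemma densSeq_le_of_subset_union {A B N : Set ℕ} (h : A ⊆ B ∪ N) (n : ℕ) :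
    densSeq A n ≤ densSeq B n + densSeq N n :=
  (densSeq_mono h n).trans (densSeq_union_le B N n)

lemma hasDens_congr {A B : Set ℕ} {a : ℝ} (hA : HasDens A a) (h : EquivDens A B) :
    HasDens B a := by
  have hsub1 : A ⊆ B ∪ (symmDiff A B) := by
    intro x hx
    by_cases hxB : x ∈ B
    · exact Or.inl hxB
    · exact Or.inr (by simp [symmDiff, hx, hxB])
  have hsub2 : B ⊆ A ∪ (symmDiff A B) := by
    intro x hx
    by_cases hxA : x ∈ A
    · exact Or.inl hxA
    · exact Or.inr (by simp [symmDiff, hx, hxA])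
  have hub : ∀ n, densSeq B n ≤ densSeq A n + densSeq (symmDiff A B) n :=
    fun n => densSeq_le_of_subset_union hsub2 n
  have hlb : ∀ n, densSeq A n - densSeq (symmDiff A B) n ≤ densSeq B n := by
    intro n
    have := densSeq_le_of_subset_union hsub1 n
    linarith
  have h1 : Filter.Tendsto (fun n => densSeq A n - densSeq (symmDiff A B) n)
      Filter.atTop (nhds a) := by simpa using hA.sub h
  have h2 : Filter.Tendsto (fun n => densSeq A n + densSeq (symmDiff A B) n)
      Filter.atTop (nhds a) := by simpa using hA.add h
  exact tendsto_of_tendsto_of_tendsto_of_le_of_le h1 h2 hlb hub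

lemma equivDens_symm {A B : Set ℕ} (h : EquivDens A B) : EquivDens B A := by
  unfold EquivDens at *
  rwa [symmDiff_comm]

lemma equivDens_of_densLE {A B : Set ℕ} (h1 : DensLE A B) (h2 : DensLE B A) :
    EquivDens A B := by
  obtain ⟨N1, hN1, hs1⟩ := h1
  obtain ⟨N2, hN2, hs2⟩ := h2
  refine nullDens_of_subset ?_ (nullDens_union hN1 hN2)
  intro x hx
  rw [Set.mem_symmDiff] at hx
  rcases hx with ⟨hA, hB⟩ | ⟨hB, hA⟩
  · rcases hs1 hA with h | h
    · exact absurd h hB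
    · exact Or.inl h
  · rcases hs2 hB with h | h
    · exact absurd h hA
    · exact Or.inr h

lemma densLE_congr_left {A A' B : Set ℕ} (h : EquivDens A A') (hle : DensLE A B) :
    DensLE A' B := by
  obtain ⟨N, hN, hs⟩ := hle
  refine ⟨N ∪ symmDiff A A', nullDens_union hN h, ?_⟩
  intro x hx
  by_cases hxA : x ∈ A
  · rcases hs hxA with h' | h'
    · exact Or.inl h'
    · exact Or.inr (Or.inl h')
  · exact Or.inr (Or.inr (by simp [symmDiff, hx, hxA]))

lemma densLE_congr_right {A B B' : Set ℕ} (h : EquivDens B B') (hle : DensLE A B) :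
    DensLE A B' := by
  obtain ⟨N, hN, hs⟩ := hle
  refine ⟨N ∪ symmDiff B B', nullDens_union hN h, ?_⟩
  intro x hx
  rcases hs hx with h' | h'
  · by_cases hxB' : x ∈ B'
    · exact Or.inl hxB'
    · exact Or.inr (Or.inr (by simp [symmDiff, h', hxB']))
  · exact Or.inr (Or.inl h')

lemma densLE_mono_dens {A B : Set ℕ} {a b : ℝ} (hA : HasDens A a) (hB : HasDens B b)
    (h : DensLE A B) : a ≤ b := by
  obtain ⟨N, hN, hs⟩ := h
  have hub : ∀ n, densSeq A n ≤ densSeq B n + densSeq N n :=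
    fun n => densSeq_le_of_subset_union hs n
  have h2 : Filter.Tendsto (fun n => densSeq B n + densSeq N n) Filter.atTop (nhds b) := by
    simpa using hB.add hN
  exact le_of_tendsto_of_tendsto' hA h2 hub

lemma hasDens_le_one {A : Set ℕ} {a : ℝ} (hA : HasDens A a) : a ≤ 1 :=
  le_of_tendsto' hA (fun n => densSeq_le_one A n)

lemma hasDens_nonneg {A : Set ℕ} {a : ℝ} (hA : HasDens A a) : 0 ≤ a :=
  ge_of_tendsto' hA (fun n => densSeq_nonneg A n)

lemma hasDens_univ : HasDens (Set.univ : Set ℕ) 1 := by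
  unfold HasDens
  have hev : ∀ᶠ n : ℕ in Filter.atTop, densSeq Set.univ n = 1 := by
    filter_upwards [Filter.eventually_ge_atTop 1] with n hn
    rw [densSeq_eq]
    have : cnt Set.univ n = n := by
      rw [cnt, Set.univ_inter, Set.ncard_eq_toFinset_card']; simp
    rw [this, div_self (by exact_mod_cast Nat.one_le_iff_ne_zero.mp hn)]
  exact Filter.Tendsto.congr' (hev.mono fun n h => h.symm) tendsto_const_nhds

lemma symmDiff_inter_subset (A X Y : Set ℕ) :
    symmDiff (A ∩ X) (A ∩ Y) ⊆ symmDiff X Y := by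
  intro x hx
  rw [Set.mem_symmDiff] at hx ⊢
  rcases hx with ⟨⟨_, h1⟩, h2⟩ | ⟨⟨_, h1⟩, h2⟩
  · exact Or.inl ⟨h1, fun hy => h2 (by tauto)⟩
  · exact Or.inr ⟨h1, fun hy => h2 (by tauto)⟩

def glue (C : ℕ → Set ℕ) (m : ℕ → ℕ) : Set ℕ :=
  {x | ∃ k, m k < x ∧ x ≤ m (k + 1) ∧ x ∈ C k}

lemma exists_level {m : ℕ → ℕ} (hm : StrictMono m) {j x : ℕ} (hx : m j < x) :
    ∃ i, j ≤ i ∧ m i < x ∧ x ≤ m (i + 1) := by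
  have hbig : ∃ t, x ≤ m (j + t + 1) := by
    refine ⟨x, le_trans ?_ (hm.le_apply)⟩
    omega
  classical
  let t0 := Nat.find hbig
  have ht0 : x ≤ m (j + t0 + 1) := Nat.find_spec hbig
  rcases Nat.eq_zero_or_pos t0 with h0 | h0
  · exact ⟨j, le_refl j, hx, by simpa [h0] using ht0⟩
  · have hlt : ¬ x ≤ m (j + (t0 - 1) + 1) := Nat.find_min hbig (by omega)
    refine ⟨j + t0, by omega, ?_, ht0⟩
    have : j + (t0 - 1) + 1 = j + t0 := by omega
    rw [this] at hlt
    omega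

lemma mem_glue_of_mem {C : ℕ → Set ℕ} {m : ℕ → ℕ} (hm : StrictMono m)
    (hmono : ∀ i j, i ≤ j → C i ⊆ C j) {j x : ℕ} (hxC : x ∈ C j) (hx : m j < x) :
    x ∈ glue C m := by
  obtain ⟨i, hji, h1, h2⟩ := exists_level hm hx
  exact ⟨i, h1, h2, hmono j i hji hxC⟩

lemma glue_inter_subset {C : ℕ → Set ℕ} {m : ℕ → ℕ} (hm : StrictMono m)
    (hmono : ∀ i j, i ≤ j → C i ⊆ C j) {k n : ℕ} (hn : n ≤ m (k + 1)) :
    glue C m ∩ Set.Icc 1 n ⊆ C k ∩ Set.Icc 1 n := by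
  rintro x ⟨⟨i, h1, h2, hxC⟩, hx⟩
  refine ⟨hmono i k ?_ hxC, hx⟩
  have : m i < m (k + 1) := lt_of_lt_of_le (lt_of_lt_of_le h1 (hx.2.trans hn)) (le_refl _)
  exact Nat.lt_succ_iff.mp (hm.lt_iff_lt.mp this)

lemma cnt_le_glue_add {C : ℕ → Set ℕ} {m : ℕ → ℕ} (hm : StrictMono m)
    (hmono : ∀ i j, i ≤ j → C i ⊆ C j) (D : Set ℕ) (j n : ℕ) :
    cnt (C j ∩ D) n ≤ cnt (glue C m ∩ D) n + m j := by
  have hsub : (C j ∩ D) ∩ Set.Icc 1 n ⊆ ((glue C m ∩ D) ∩ Set.Icc 1 n) ∪ Set.Icc 1 (m j) := by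
    rintro x ⟨⟨hxC, hxD⟩, hx1, hx2⟩
    by_cases hxm : m j < x
    · exact Or.inl ⟨⟨mem_glue_of_mem hm hmono hxC hxm, hxD⟩, hx1, hx2⟩
    · exact Or.inr ⟨hx1, by omega⟩
  calc cnt (C j ∩ D) n ≤ (((glue C m ∩ D) ∩ Set.Icc 1 n) ∪ Set.Icc 1 (m j)).ncard :=
        Set.ncard_le_ncard hsub (((cnt_finite _ n)).union (Set.finite_Icc _ _))
    _ ≤ ((glue C m ∩ D) ∩ Set.Icc 1 n).ncard + (Set.Icc 1 (m j)).ncard :=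
        Set.ncard_union_le _ _
    _ ≤ cnt (glue C m ∩ D) n + m j := by
        rw [cnt]
        gcongr
        rw [Set.ncard_eq_toFinset_card']; simp

lemma densSeq_le_glue_add {C : ℕ → Set ℕ} {m : ℕ → ℕ} (hm : StrictMono m)
    (hmono : ∀ i j, i ≤ j → C i ⊆ C j) (D : Set ℕ) (j n : ℕ) :
    densSeq (C j ∩ D) n ≤ densSeq (glue C m ∩ D) n + (m j : ℝ) / n := by
  rw [densSeq_eq, densSeq_eq, ← add_div]
  refine div_le_div_of_nonneg_right ?_ (Nat.cast_nonneg n)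
  exact_mod_cast cnt_le_glue_add hm hmono D j n

lemma tendsto_zero_of_forall_eventually_le {f : ℕ → ℝ} (h0 : ∀ n, 0 ≤ f n)
    (h : ∀ ε : ℝ, 0 < ε → ∀ᶠ n in Filter.atTop, f n < ε) :
    Filter.Tendsto f Filter.atTop (nhds 0) := by
  rw [Metric.tendsto_atTop]
  intro ε hε
  obtain ⟨N, hN⟩ := (h ε hε).exists_forall_of_atTop
  exact ⟨N, fun n hn => by
    rw [Real.dist_eq, sub_zero, abs_of_nonneg (h0 n)]
    exact hN n hn⟩

lemma densSeq_glue_le {C : ℕ → Set ℕ} {m : ℕ → ℕ} (hm : StrictMono m)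
    (hmono : ∀ i j, i ≤ j → C i ⊆ C j) {k n : ℕ} (hn : n ≤ m (k + 1)) :
    densSeq (glue C m) n ≤ densSeq (C k) n := by
  rw [densSeq_eq, densSeq_eq]
  refine div_le_div_of_nonneg_right ?_ (Nat.cast_nonneg n)
  exact_mod_cast Set.ncard_le_ncard (glue_inter_subset hm hmono hn) (cnt_finite _ n)

lemma densSeq_le_glue_add' {C : ℕ → Set ℕ} {m : ℕ → ℕ} (hm : StrictMono m)
    (hmono : ∀ i j, i ≤ j → C i ⊆ C j) (j n : ℕ) :
    densSeq (C j) n ≤ densSeq (glue C m) n + (m j : ℝ) / n := by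
  simpa [Set.inter_univ] using densSeq_le_glue_add hm hmono Set.univ j n

lemma tendsto_inv_nat : Filter.Tendsto (fun j : ℕ => (1 : ℝ) / (j + 1))
    Filter.atTop (nhds 0) := tendsto_one_div_add_atTop_nhds_zero_nat

lemma tendsto_m_div (m : ℕ) : Filter.Tendsto (fun n : ℕ => (m : ℝ) / n)
    Filter.atTop (nhds 0) := tendsto_const_nhds.div_atTop tendsto_natCast_atTop_atTop

lemma glue_hasDens {C : ℕ → Set ℕ} {c : ℕ → ℝ} {cLim : ℝ} {m : ℕ → ℕ}
    (hmono : ∀ i j, i ≤ j → C i ⊆ C j)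
    (hcle : ∀ k, c k ≤ cLim) (hconv : Filter.Tendsto c Filter.atTop (nhds cLim))
    (hm : StrictMono m)
    (hadapt : ∀ k, ∀ n, m k ≤ n → |densSeq (C k) n - c k| ≤ 1 / (k + 1)) :
    HasDens (glue C m) cLim := by
  rw [HasDens, Metric.tendsto_atTop]
  intro ε hε
  have hj : ∃ j : ℕ, |c j - cLim| < ε / 4 ∧ (1 : ℝ) / (j + 1) < ε / 4 := by
    have h1 := Metric.tendsto_atTop.mp hconv (ε / 4) (by linarith)
    have h2 := Metric.tendsto_atTop.mp tendsto_inv_nat (ε / 4) (by linarith)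
    obtain ⟨J1, hJ1⟩ := h1
    obtain ⟨J2, hJ2⟩ := h2
    refine ⟨max J1 J2, ?_, ?_⟩
    · have := hJ1 (max J1 J2) (le_max_left _ _); rwa [Real.dist_eq] at this
    · have := hJ2 (max J1 J2) (le_max_right _ _)
      rw [Real.dist_eq, sub_zero] at this
      exact lt_of_le_of_lt (le_abs_self _) this
  obtain ⟨j, hj1, hj2⟩ := hj
  obtain ⟨n1, hn1⟩ := Metric.tendsto_atTop.mp (tendsto_m_div (m j)) (ε / 4) (by linarith)
  refine ⟨max (m j + 1) n1, fun n hn => ?_⟩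
  have hnmj : m j < n := lt_of_lt_of_le (Nat.lt_succ_self _) (le_trans (le_max_left _ _) hn)
  obtain ⟨i, hji, hi1, hi2⟩ := exists_level hm hnmj
  -- upper bound
  have hup : densSeq (glue C m) n ≤ cLim + ε / 4 := by
    have h1 : densSeq (glue C m) n ≤ densSeq (C i) n := densSeq_glue_le hm hmono hi2
    have h2 : |densSeq (C i) n - c i| ≤ 1 / (i + 1) := hadapt i n hi1.le
    have h3 : (1 : ℝ) / (i + 1) ≤ 1 / (j + 1) := by
      apply one_div_le_one_div_of_le (by positivity)
      have : (j : ℝ) ≤ i := by exact_mod_cast hji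
      linarith
    have h4 := hcle i
    rw [abs_le] at h2
    linarith
  -- lower bound
  have hlo : cLim - 3 * ε / 4 < densSeq (glue C m) n := by
    have h1 : densSeq (C j) n ≤ densSeq (glue C m) n + (m j : ℝ) / n :=
      densSeq_le_glue_add' hm hmono j n
    have h2 : |densSeq (C j) n - c j| ≤ 1 / (j + 1) := hadapt j n hnmj.le
    have h3 : (m j : ℝ) / n < ε / 4 := by
      have := hn1 n (le_trans (le_max_right _ _) hn)
      rw [Real.dist_eq, sub_zero] at this
      calc (m j : ℝ) / n ≤ |(m j : ℝ) / n| := le_abs_self _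
        _ < ε / 4 := this
    rw [abs_le] at h2
    rw [abs_lt] at hj1
    linarith
  rw [Real.dist_eq, abs_lt]
  constructor <;> linarith

lemma glue_diff_subset {C : ℕ → Set ℕ} {m : ℕ → ℕ} (hm : StrictMono m)
    (hmono : ∀ i j, i ≤ j → C i ⊆ C j) (j : ℕ) :
    C j \ glue C m ⊆ Set.Iic (m j) := by
  rintro x ⟨hxC, hxg⟩
  by_contra hx
  exact hxg (mem_glue_of_mem hm hmono hxC (by simpa [Set.mem_Iic] using hx))

lemma glue_densLE {C : ℕ → Set ℕ} {m : ℕ → ℕ} (hm : StrictMono m)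
    (hmono : ∀ i j, i ≤ j → C i ⊆ C j) (j : ℕ) :
    DensLE (C j) (glue C m) := by
  refine ⟨Set.Iic (m j), nullDens_Iic _, fun x hx => ?_⟩
  by_cases hxg : x ∈ glue C m
  · exact Or.inl hxg
  · exact Or.inr (glue_diff_subset hm hmono j ⟨hx, hxg⟩)

lemma glue_least {C : ℕ → Set ℕ} {c : ℕ → ℝ} {cLim : ℝ} {m : ℕ → ℕ}
    (hmono : ∀ i j, i ≤ j → C i ⊆ C j) (hC : ∀ k, HasDens (C k) (c k))
    (hcle : ∀ k, c k ≤ cLim) (hconv : Filter.Tendsto c Filter.atTop (nhds cLim))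
    (hm : StrictMono m)
    (hadapt : ∀ k, ∀ n, m k ≤ n → |densSeq (C k) n - c k| ≤ 1 / (k + 1))
    (C' : Set ℕ) (hC' : IsDensitySet C') (hub : ∀ j, DensLE (C j) C') :
    DensLE (glue C m) C' := by
  have hglue : HasDens (glue C m) cLim := glue_hasDens hmono hcle hconv hm hadapt
  have hCjC' : ∀ j, HasDens (C j ∩ C') (c j) := by
    intro j
    obtain ⟨N, hN, hs⟩ := hub j
    refine hasDens_congr (hC j) (nullDens_of_subset ?_ hN)
    intro x hx
    rw [Set.mem_symmDiff] at hx
    rcases hx with ⟨h1, h2⟩ | ⟨⟨h1, _⟩, h2⟩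
    · rcases hs h1 with h | h
      · exact absurd ⟨h1, h⟩ h2
      · exact h
    · exact absurd h1 h2
  have hnull : NullDens (glue C m \ C') := by
    apply tendsto_zero_of_forall_eventually_le (fun n => densSeq_nonneg _ n)
    intro ε hε
    obtain ⟨J, hJ⟩ := Metric.tendsto_atTop.mp hconv (ε / 4) (by linarith)
    have hj1 : |c J - cLim| < ε / 4 := by
      have := hJ J (le_refl J); rwa [Real.dist_eq] at this
    have hev1 : ∀ᶠ n in Filter.atTop, |densSeq (glue C m) n - cLim| < ε / 4 := by
      have := Metric.tendsto_atTop.mp hglue (ε / 4) (by linarith)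
      obtain ⟨N, hN⟩ := this
      filter_upwards [Filter.eventually_ge_atTop N] with n hn
      have := hN n hn; rwa [Real.dist_eq] at this
    have hev2 : ∀ᶠ n in Filter.atTop, |densSeq (C J ∩ C') n - c J| < ε / 4 := by
      obtain ⟨N, hN⟩ := Metric.tendsto_atTop.mp (hCjC' J) (ε / 4) (by linarith)
      filter_upwards [Filter.eventually_ge_atTop N] with n hn
      have := hN n hn; rwa [Real.dist_eq] at this
    have hev3 : ∀ᶠ n : ℕ in Filter.atTop, (m J : ℝ) / n < ε / 4 := by
      obtain ⟨N, hN⟩ := Metric.tendsto_atTop.mp (tendsto_m_div (m J)) (ε / 4) (by linarith)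
      filter_upwards [Filter.eventually_ge_atTop N] with n hn
      have := hN n hn
      rw [Real.dist_eq, sub_zero] at this
      exact lt_of_le_of_lt (le_abs_self _) this
    filter_upwards [hev1, hev2, hev3] with n h1 h2 h3
    have hd : densSeq (glue C m \ C') n =
        densSeq (glue C m) n - densSeq (glue C m ∩ C') n := by
      have := densSeq_diff (Set.inter_subset_left (s := glue C m) (t := C')) n
      rwa [Set.diff_self_inter] at this
    have hlb : densSeq (C J ∩ C') n ≤ densSeq (glue C m ∩ C') n + (m J : ℝ) / n :=
      densSeq_le_glue_add hm hmono C' J n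
    rw [abs_lt] at h1 h2 hj1
    rw [hd]
    linarith
  refine ⟨glue C m \ C', hnull, fun x hx => ?_⟩
  by_cases hxC' : x ∈ C'
  · exact Or.inl hxC'
  · exact Or.inr ⟨hx, hxC'⟩

lemma nullDens_biUnion (s : Finset ℕ) (f : ℕ → Set ℕ) (h : ∀ i ∈ s, NullDens (f i)) :
    NullDens (⋃ i ∈ s, f i) := by
  classical
  induction s using Finset.induction_on with
  | empty => simpa using nullDens_empty
  | @insert a s' ha ih =>
    rw [Finset.set_biUnion_insert]
    exact nullDens_union (h a (Finset.mem_insert_self a s'))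
      (ih fun i hi => h i (Finset.mem_insert_of_mem hi))

lemma densLE_chain {A : ℕ → Set ℕ} (h : ∀ n, DensLE (A n) (A (n + 1))) :
    ∀ k l, k ≤ l → DensLE (A k) (A l) := by
  intro k l hkl
  induction l, hkl using Nat.le_induction with
  | base => exact densLE_refl _
  | succ l hkl ih => exact densLE_trans ih (h l)

lemma accumulate_equiv {A : ℕ → Set ℕ} (h : ∀ n, DensLE (A n) (A (n + 1))) (n : ℕ) :
    EquivDens (A n) (Set.accumulate A n) := by
  have hnull : NullDens (Set.accumulate A n \ A n) := by
    have hN : ∀ k, k ≤ n → ∃ N, NullDens N ∧ A k \ A n ⊆ N := by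
      intro k hk
      obtain ⟨N, hN, hs⟩ := densLE_chain h k n hk
      exact ⟨N, hN, fun x hx => (hs hx.1).resolve_left hx.2⟩
    choose! N hN1 hN2 using hN
    refine nullDens_of_subset ?_ (nullDens_biUnion (Finset.range (n + 1)) N
      (fun i hi => hN1 i (by simpa using Nat.lt_succ_iff.mp (Finset.mem_range.mp hi))))
    rintro x ⟨hx1, hx2⟩
    rw [Set.mem_accumulate] at hx1
    obtain ⟨k, hk, hxk⟩ := hx1
    exact Set.mem_biUnion (Finset.mem_range.mpr (Nat.lt_succ_of_le hk))
      (hN2 k hk ⟨hxk, hx2⟩)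
  refine nullDens_of_subset ?_ hnull
  intro x hx
  rw [Set.mem_symmDiff] at hx
  rcases hx with ⟨h1, h2⟩ | ⟨h1, h2⟩
  · exact absurd (Set.subset_accumulate h1) h2
  · exact ⟨h1, h2⟩

lemma exists_adapted {C D : ℕ → Set ℕ} {c d : ℕ → ℝ}
    (hC : ∀ k, HasDens (C k) (c k)) (hD : ∀ k, HasDens (D k) (d k)) :
    ∃ m : ℕ → ℕ, StrictMono m ∧
      (∀ k, ∀ n, m k ≤ n → |densSeq (C k) n - c k| ≤ 1 / (k + 1)) ∧
      (∀ k, ∀ n, m k ≤ n → |densSeq (D k) n - d k| ≤ 1 / (k + 1)) := by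
  have h1 : ∀ k : ℕ, ∃ M : ℕ, ∀ n, M ≤ n → |densSeq (C k) n - c k| ≤ 1 / (k + 1) := by
    intro k
    obtain ⟨M, hM⟩ := Metric.tendsto_atTop.mp (hC k) (1 / (k + 1)) (by positivity)
    exact ⟨M, fun n hn => by have := hM n hn; rw [Real.dist_eq] at this; linarith⟩
  have h2 : ∀ k : ℕ, ∃ M : ℕ, ∀ n, M ≤ n → |densSeq (D k) n - d k| ≤ 1 / (k + 1) := by
    intro k
    obtain ⟨M, hM⟩ := Metric.tendsto_atTop.mp (hD k) (1 / (k + 1)) (by positivity)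
    exact ⟨M, fun n hn => by have := hM n hn; rw [Real.dist_eq] at this; linarith⟩
  choose M1 hM1 using h1
  choose M2 hM2 using h2
  refine ⟨fun k => k + ∑ i ∈ Finset.range (k + 1), (M1 i + M2 i), ?_, ?_, ?_⟩
  · apply strictMono_nat_of_lt_succ
    intro k
    have h : ∑ i ∈ Finset.range (k + 1), (M1 i + M2 i) ≤
        ∑ i ∈ Finset.range (k + 1 + 1), (M1 i + M2 i) :=
      Finset.sum_le_sum_of_subset (Finset.range_subset_range.mpr (by omega))
    show k + ∑ i ∈ Finset.range (k + 1), (M1 i + M2 i) <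
        (k + 1) + ∑ i ∈ Finset.range (k + 1 + 1), (M1 i + M2 i)
    omega
  · intro k n hn
    refine hM1 k n (le_trans ?_ hn)
    have h : M1 k + M2 k ≤ ∑ i ∈ Finset.range (k + 1), (M1 i + M2 i) :=
      Finset.single_le_sum (f := fun i => M1 i + M2 i) (fun _ _ => Nat.zero_le _)
        (Finset.self_mem_range_succ k)
    show M1 k ≤ k + ∑ i ∈ Finset.range (k + 1), (M1 i + M2 i)
    omega
  · intro k n hn
    refine hM2 k n (le_trans ?_ hn)
    have h : M1 k + M2 k ≤ ∑ i ∈ Finset.range (k + 1), (M1 i + M2 i) :=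
      Finset.single_le_sum (f := fun i => M1 i + M2 i) (fun _ _ => Nat.zero_le _)
        (Finset.self_mem_range_succ k)
    show M2 k ≤ k + ∑ i ∈ Finset.range (k + 1), (M1 i + M2 i)
    omega

lemma exists_lub_pair (A0 : Set ℕ) (C : ℕ → Set ℕ)
    (hmono : ∀ i j, i ≤ j → C i ⊆ C j)
    (hdens : ∀ n, IsDensitySet (C n)) (hdens2 : ∀ n, IsDensitySet (A0 ∩ C n)) :
    ∃ B, IsDensitySet B ∧ IsDensitySet (A0 ∩ B) ∧
      (∀ n, DensLE (C n) B) ∧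
      (∀ C', IsDensitySet C' → (∀ n, DensLE (C n) C') → DensLE B C') ∧
      (∀ n, DensLE (A0 ∩ C n) (A0 ∩ B)) ∧
      (∀ C', IsDensitySet C' → (∀ n, DensLE (A0 ∩ C n) C') → DensLE (A0 ∩ B) C') := by
  choose c hc using hdens
  choose d hd using hdens2
  have hcmono : Monotone c := by
    intro k l hkl
    exact densLE_mono_dens (hc k) (hc l) (densLE_of_subset (hmono k l hkl))
  have hdmono : Monotone d := by
    intro k l hkl
    exact densLE_mono_dens (hd k) (hd l)
      (densLE_of_subset (Set.inter_subset_inter_right _ (hmono k l hkl)))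
  have hcbdd : BddAbove (Set.range c) := by
    refine ⟨1, ?_⟩; rintro x ⟨n, rfl⟩; exact hasDens_le_one (hc n)
  have hdbdd : BddAbove (Set.range d) := by
    refine ⟨1, ?_⟩; rintro x ⟨n, rfl⟩; exact hasDens_le_one (hd n)
  have hcconv := tendsto_atTop_ciSup hcmono hcbdd
  have hdconv := tendsto_atTop_ciSup hdmono hdbdd
  have hcle : ∀ k, c k ≤ ⨆ n, c n := fun k => le_ciSup hcbdd k
  have hdle : ∀ k, d k ≤ ⨆ n, d n := fun k => le_ciSup hdbdd k
  obtain ⟨m, hm, hadC, hadD⟩ := exists_adapted hc hd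
  have hmono2 : ∀ i j, i ≤ j → A0 ∩ C i ⊆ A0 ∩ C j :=
    fun i j hij => Set.inter_subset_inter_right _ (hmono i j hij)
  have hAglue : A0 ∩ glue C m = glue (fun n => A0 ∩ C n) m := by
    ext x
    constructor
    · rintro ⟨hxA, k, h1, h2, h3⟩; exact ⟨k, h1, h2, hxA, h3⟩
    · rintro ⟨k, h1, h2, hxA, h3⟩; exact ⟨hxA, k, h1, h2, h3⟩
  refine ⟨glue C m, ⟨_, glue_hasDens hmono hcle hcconv hm hadC⟩, ?_, ?_, ?_, ?_, ?_⟩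
  · rw [hAglue]; exact ⟨_, glue_hasDens hmono2 hdle hdconv hm hadD⟩
  · exact fun n => glue_densLE hm hmono n
  · exact fun C' hC' hub => glue_least hmono hc hcle hcconv hm hadC C' hC' hub
  · rw [hAglue]; exact fun n => glue_densLE hm hmono2 n
  · rw [hAglue]; exact fun C' hC' hub => glue_least hmono2 hd hdle hdconv hm hadD C' hC' hub

lemma exists_lub {A : ℕ → Set ℕ} (hd : ∀ n, IsDensitySet (A n))
    (hch : ∀ n, DensLE (A n) (A (n + 1))) :
    ∃ B, IsDensitySet B ∧ (∀ n, DensLE (A n) B) ∧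
      ∀ C', IsDensitySet C' → (∀ n, DensLE (A n) C') → DensLE B C' := by
  have hCd : ∀ n, IsDensitySet (Set.accumulate A n) := by
    intro n
    obtain ⟨a, ha⟩ := hd n
    exact ⟨a, hasDens_congr ha (accumulate_equiv hch n)⟩
  have hmono : ∀ i j, i ≤ j → Set.accumulate A i ⊆ Set.accumulate A j :=
    fun i j hij => Set.monotone_accumulate hij
  obtain ⟨B, hB1, _, hB3, hB4, _, _⟩ := exists_lub_pair Set.univ (Set.accumulate A)
    hmono hCd (by simpa [Set.univ_inter] using hCd)
  refine ⟨B, hB1, ?_, ?_⟩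
  · exact fun n => densLE_trans (densLE_of_subset (Set.subset_accumulate)) (hB3 n)
  · intro C' hC' hub
    exact hB4 C' hC' (fun n => densLE_congr_left (accumulate_equiv hch n) (hub n))

lemma isDensitySet_diff {A B : Set ℕ} (hA : IsDensitySet A) (hB : IsDensitySet B)
    (h : DensLE A B) : IsDensitySet (B \ A) := by
  obtain ⟨a, ha⟩ := hA
  obtain ⟨b, hb⟩ := hB
  obtain ⟨N, hN, hs⟩ := h
  have hequiv : EquivDens A (A ∩ B) := by
    refine nullDens_of_subset ?_ hN
    intro x hx
    rw [Set.mem_symmDiff] at hx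
    rcases hx with ⟨h1, h2⟩ | ⟨⟨h1, _⟩, h2⟩
    · rcases hs h1 with h' | h'
      · exact absurd ⟨h1, h'⟩ h2
      · exact h'
    · exact absurd h1 h2
  have hAB : HasDens (A ∩ B) a := hasDens_congr ha hequiv
  have hkey : ∀ n, densSeq (B \ A) n = densSeq B n - densSeq (A ∩ B) n := by
    intro n
    have := densSeq_diff (Set.inter_subset_right (s := A) (t := B)) n
    rwa [show B \ (A ∩ B) = B \ A by ext x; simp only [Set.mem_diff, Set.mem_inter_iff]; tauto] at this
  refine ⟨b - a, ?_⟩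
  unfold HasDens
  have := hb.sub hAB
  exact this.congr (fun n => (hkey n).symm)

lemma isDSystem_D : IsDSystem {A : Set ℕ | IsDensitySet A} := by
  refine ⟨fun A hA => hA, fun A _ B hB _ => hB, ⟨1, hasDens_univ⟩, ?_, ?_, ?_⟩
  · exact fun A hA B hB h => isDensitySet_diff hA hB h
  · rintro A ⟨a, ha⟩ B ⟨b, hb⟩ h
    exact ⟨a + b, (ha.add hb).congr (fun n => (densSeq_union_eq h n).symm)⟩
  · intro A hA hch
    obtain ⟨B, h1, h2, h3⟩ := exists_lub hA hch
    exact ⟨B, h1, h2, h3⟩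

def genG (F : Set (Set ℕ)) : Set (Set ℕ) :=
  {A | ∀ Δ : Set (Set ℕ), IsDSystem Δ → F ⊆ Δ → A ∈ Δ}

lemma genG_dens {F : Set (Set ℕ)} (hFdens : ∀ A ∈ F, IsDensitySet A) :
    ∀ A ∈ genG F, IsDensitySet A :=
  fun A hA => hA {A | IsDensitySet A} isDSystem_D hFdens

lemma isDSystem_genG {F : Set (Set ℕ)} (hFdens : ∀ A ∈ F, IsDensitySet A) :
    IsDSystem (genG F) := by
  refine ⟨genG_dens hFdens, ?_, ?_, ?_, ?_, ?_⟩
  · intro A hA B hB hE Δ hΔ hF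
    exact hΔ.2.1 A (hA Δ hΔ hF) B hB hE
  · intro Δ hΔ _
    exact hΔ.2.2.1
  · intro A hA B hB h Δ hΔ hF
    exact hΔ.2.2.2.1 A (hA Δ hΔ hF) B (hB Δ hΔ hF) h
  · intro A hA B hB h Δ hΔ hF
    exact hΔ.2.2.2.2.1 A (hA Δ hΔ hF) B (hB Δ hΔ hF) h
  · intro A hA hch
    obtain ⟨B, hB1, hB2, hB3⟩ :=
      exists_lub (fun n => genG_dens hFdens (A n) (hA n)) hch
    refine ⟨B, ?_, hB2, hB3⟩
    intro Δ hΔ hF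
    obtain ⟨BΔ, hBΔmem, hBΔub, hBΔleast⟩ :=
      hΔ.2.2.2.2.2 A (fun n => hA n Δ hΔ hF) hch
    have hBΔdens : IsDensitySet BΔ := hΔ.1 BΔ hBΔmem
    have hE : EquivDens BΔ B :=
      equivDens_of_densLE (hBΔleast B hB1 hB2) (hB3 BΔ hBΔdens hBΔub)
    exact hΔ.2.1 BΔ hBΔmem B hB1 hE

lemma isDSystem_GA {F : Set (Set ℕ)} (hFdens : ∀ A ∈ F, IsDensitySet A)
    {A : Set ℕ} (hA : A ∈ genG F) :
    IsDSystem {B | B ∈ genG F ∧ A ∩ B ∈ genG F} := by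
  have hG := isDSystem_genG hFdens
  have hGd := genG_dens hFdens
  refine ⟨?_, ?_, ?_, ?_, ?_, ?_⟩
  · exact fun B hB => hGd B hB.1
  · rintro B ⟨hB1, hB2⟩ B' hB' hE
    refine ⟨hG.2.1 B hB1 B' hB' hE, ?_⟩
    have hE2 : EquivDens (A ∩ B) (A ∩ B') :=
      nullDens_of_subset (symmDiff_inter_subset A B B') hE
    obtain ⟨ab, hab⟩ := hGd _ hB2
    exact hG.2.1 (A ∩ B) hB2 (A ∩ B') ⟨ab, hasDens_congr hab hE2⟩ hE2
  · exact ⟨hG.2.2.1, by rwa [Set.inter_univ]⟩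
  · rintro B ⟨hB1, hB2⟩ C ⟨hC1, hC2⟩ hle
    refine ⟨hG.2.2.2.1 B hB1 C hC1 hle, ?_⟩
    have hid : A ∩ (C \ B) = (A ∩ C) \ (A ∩ B) := by
      ext x; simp only [Set.mem_inter_iff, Set.mem_diff]; tauto
    rw [hid]
    refine hG.2.2.2.1 (A ∩ B) hB2 (A ∩ C) hC2 ?_
    obtain ⟨N, hN, hs⟩ := hle
    exact ⟨N, hN, fun x hx => (hs hx.2).imp (fun h => ⟨hx.1, h⟩) id⟩
  · rintro B ⟨hB1, hB2⟩ C ⟨hC1, hC2⟩ hdisj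
    refine ⟨hG.2.2.2.2.1 B hB1 C hC1 hdisj, ?_⟩
    have hid : A ∩ (B ∪ C) = (A ∩ B) ∪ (A ∩ C) := Set.inter_union_distrib_left A B C
    rw [hid]
    refine hG.2.2.2.2.1 (A ∩ B) hB2 (A ∩ C) hC2 ?_
    rw [show (A ∩ B) ∩ (A ∩ C) = A ∩ (B ∩ C) by ext x; simp; tauto]
    rw [hdisj, Set.inter_empty]
  · intro B hB hch
    set C : ℕ → Set ℕ := Set.accumulate B with hCdef
    have hchain : ∀ n, DensLE (B n) (B (n + 1)) := hch
    have hEq : ∀ n, EquivDens (B n) (C n) := fun n => accumulate_equiv hchain n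
    have hCdens : ∀ n, IsDensitySet (C n) := by
      intro n
      obtain ⟨b, hb⟩ := hGd _ (hB n).1
      exact ⟨b, hasDens_congr hb (hEq n)⟩
    have hCG : ∀ n, C n ∈ genG F := fun n =>
      hG.2.1 (B n) (hB n).1 (C n) (hCdens n) (hEq n)
    have hEq2 : ∀ n, EquivDens (A ∩ B n) (A ∩ C n) := fun n =>
      nullDens_of_subset (symmDiff_inter_subset A (B n) (C n)) (hEq n)
    have hACdens : ∀ n, IsDensitySet (A ∩ C n) := by
      intro n
      obtain ⟨b, hb⟩ := hGd _ (hB n).2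
      exact ⟨b, hasDens_congr hb (hEq2 n)⟩
    have hACG : ∀ n, A ∩ C n ∈ genG F := fun n =>
      hG.2.1 (A ∩ B n) (hB n).2 (A ∩ C n) (hACdens n) (hEq2 n)
    have hmono : ∀ i j, i ≤ j → C i ⊆ C j := fun i j hij => Set.monotone_accumulate hij
    obtain ⟨Bg, hBg1, hBg2, hBg3, hBg4, hBg5, hBg6⟩ :=
      exists_lub_pair A C hmono hCdens hACdens
    -- Bg is a global lub of the chain B
    have hub : ∀ n, DensLE (B n) Bg := fun n =>
      densLE_congr_left (equivDens_symm (hEq n)) (hBg3 n)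
    have hleast : ∀ C', IsDensitySet C' → (∀ n, DensLE (B n) C') → DensLE Bg C' := by
      intro C' hC' h
      exact hBg4 C' hC' (fun n => densLE_congr_left (hEq n) (h n))
    -- Bg ∈ genG F
    have hBgG : Bg ∈ genG F := by
      obtain ⟨Bstar, hBstarmem, hBstarub, hBstarleast⟩ :=
        hG.2.2.2.2.2 B (fun n => (hB n).1) hchain
      have hE : EquivDens Bstar Bg :=
        equivDens_of_densLE (hBstarleast Bg hBg1 hub) (hleast Bstar (hGd _ hBstarmem) hBstarub)
      exact hG.2.1 Bstar hBstarmem Bg hBg1 hE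
    -- A ∩ Bg ∈ genG F
    have hABgG : A ∩ Bg ∈ genG F := by
      have hACchain : ∀ n, DensLE (A ∩ C n) (A ∩ C (n + 1)) := fun n =>
        densLE_of_subset (Set.inter_subset_inter_right _ (hmono n (n + 1) (by omega)))
      obtain ⟨Dstar, hDstarmem, hDstarub, hDstarleast⟩ :=
        hG.2.2.2.2.2 (fun n => A ∩ C n) hACG hACchain
      have hE : EquivDens Dstar (A ∩ Bg) :=
        equivDens_of_densLE (hDstarleast (A ∩ Bg) hBg2 hBg5)
          (hBg6 Dstar (hGd _ hDstarmem) hDstarub)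
      exact hG.2.1 Dstar hDstarmem (A ∩ Bg) hBg2 hE
    exact ⟨Bg, ⟨hBgG, hABgG⟩, hub, hleast⟩

lemma genG_inter {F : Set (Set ℕ)}
    (hFdens : ∀ A ∈ F, IsDensitySet A)
    (hFinter : ∀ A ∈ F, ∀ B ∈ F, A ∩ B ∈ F) :
    ∀ A ∈ genG F, ∀ B ∈ genG F, A ∩ B ∈ genG F := by
  have hFG : F ⊆ genG F := fun A hA Δ _ hF => hF hA
  -- Step 1: for A ∈ F, every B ∈ genG F satisfies A ∩ B ∈ genG F
  have step1 : ∀ A ∈ F, ∀ B ∈ genG F, A ∩ B ∈ genG F := by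
    intro A hAF B hBG
    have hsys := isDSystem_GA hFdens (hFG hAF)
    have hsub : F ⊆ {B | B ∈ genG F ∧ A ∩ B ∈ genG F} :=
      fun X hX => ⟨hFG hX, hFG (hFinter A hAF X hX)⟩
    exact (hBG _ hsys hsub).2
  -- Step 2
  intro A hAG B hBG
  have hsys := isDSystem_GA hFdens hBG
  have hsub : F ⊆ {X | X ∈ genG F ∧ B ∩ X ∈ genG F} := by
    intro X hX
    refine ⟨hFG hX, ?_⟩
    rw [Set.inter_comm]
    exact step1 X hX B hBG
  have := (hAG _ hsys hsub).2
  rwa [Set.inter_comm]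

/-- If `𝓕 ⊆ 𝒟` is closed under finite intersections and `Δ` is the
intersection of all d-systems in `𝒟/∼` containing `𝓕/∼`, then `Δ` is closed under
intersections. -/
theorem dSystem_generated_inter_closed (F : Set (Set ℕ))
    (hFdens : ∀ A ∈ F, IsDensitySet A)
    (hFinter : ∀ A ∈ F, ∀ B ∈ F, A ∩ B ∈ F) :
    ∀ A ∈ {A : Set ℕ | ∀ Δ : Set (Set ℕ), IsDSystem Δ → F ⊆ Δ → A ∈ Δ},
    ∀ B ∈ {A : Set ℕ | ∀ Δ : Set (Set ℕ), IsDSystem Δ → F ⊆ Δ → A ∈ Δ},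
      IsDensitySet (A ∩ B) ∧
        A ∩ B ∈ {A : Set ℕ | ∀ Δ : Set (Set ℕ), IsDSystem Δ → F ⊆ Δ → A ∈ Δ} := by
  intro A hA B hB
  have h := genG_inter hFdens hFinter A hA B hB
  exact ⟨genG_dens hFdens _ h, h⟩
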